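/- (Proposition 1) Suppose all events are uniquely modifying and the causal order is compatible with real time. Then for every correct snapshot s satisfying quasi-instantaneous consistency, the cut of s is causally consistent. -/
import Mathlib

/-- (Proposition 1) If all events are uniquely modifying and the causal order is
compatible with real time, then for every correct snapshot `s` satisfying
quasi-instantaneous consistency, the cut of `s` is causally consistent. -/
theorem quasiInstantaneous_implies_causallyConsistent
    (R V E : Type*) (m : R → ℕ → V)
    (reg : E → R) (rt : E → ℕ) (prec : E → E → Prop)
    (htrans : Transitive prec)
    (hcompat : ∀ e f, prec e f → rt e ≤ rt f)
    (huniq : ∀ (r : R) (t t' : ℕ), m r t = m r t' →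
      ∀ e, reg e = r → (rt e ≤ t ↔ rt e ≤ t'))
    (s : R → V × ℕ)
    (hcorrect : ∀ r, (s r).1 = m r (s r).2)
    (hquasi : ∃ t : ℕ, ∀ r, (s r).1 = m r t) :
    ∀ e ∈ {e : E | rt e ≤ (s (reg e)).2},
      ∀ e', prec e' e → e' ∈ {e : E | rt e ≤ (s (reg e)).2} := by
  obtain ⟨t, ht⟩ := hquasi
  intro e he e' hp
  have key : ∀ f : E, rt f ≤ (s (reg f)).2 ↔ rt f ≤ t := fun f =>
    huniq (reg f) (s (reg f)).2 t ((hcorrect (reg f)).symm.trans (ht (reg f))) f rfl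
  exact (key e').mpr (le_trans (hcompat e' e hp) ((key e).mp he))
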